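/- Let H₃(ℤ) denote the integer Heisenberg group, i.e. the group of 3×3 upper unitriangular matrices with integer entries, regarded as a discrete subgroup of SL(3,ℝ). Let X ∈ 𝒫(3) satisfy (X⁻¹)₂₃ = 0. Then the set of elements γ ∈ H₃(ℤ) for which there exists A ∈ 𝒫(3) with s(γ.X, A) = s(X, A) and s(γ'.X, A) > s(X, A) for every γ' ∈ H₃(ℤ) ∖ {1, γ} is infinite. (Hence the Dirichlet–Selberg domain DS(X, H₃(ℤ)) is infinitely-sided.) -/

import Mathlib

open Matrix

namespace Stmt19

/-- Membership in `𝒫(3)`: symmetric positive definite of determinant 1. -/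
def PD3 (X : Matrix (Fin 3) (Fin 3) ℝ) : Prop := X.PosDef ∧ X.det = 1

/-- Selberg's invariant `s(X,Y) = tr(X⁻¹·Y)`. -/
noncomputable def sel (X Y : Matrix (Fin 3) (Fin 3) ℝ) : ℝ := (X⁻¹ * Y).trace

/-- The action `g.X = gᵀ·X·g`. -/
def act (g X : Matrix (Fin 3) (Fin 3) ℝ) : Matrix (Fin 3) (Fin 3) ℝ := gᵀ * X * g

/-- Membership in the integer Heisenberg group `H₃(ℤ) < SL(3,ℝ)`: upper unitriangular
matrices with integer entries. -/
def Heis (γ : Matrix (Fin 3) (Fin 3) ℝ) : Prop :=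
  ∃ a b c : ℤ, γ = !![1, (a : ℝ), (b : ℝ); 0, 1, (c : ℝ); 0, 0, 1]


/-! ### Auxiliary material for the proof -/

section Aux

lemma heis_mul_left (a b c : ℝ) :
    !![1,-a,a*c-b;0,1,-c;(0:ℝ),0,1] * !![1,a,b;0,1,c;0,0,1] = 1 := by
  rw [Matrix.one_fin_three]
  ext i j
  fin_cases i <;> fin_cases j <;>
    simp [Matrix.mul_apply, Fin.sum_univ_three, Matrix.vecHead, Matrix.vecTail] <;> ring

lemma heis_mul_right (a b c : ℝ) :
    !![1,a,b;0,1,c;(0:ℝ),0,1] * !![1,-a,a*c-b;0,1,-c;0,0,1] = 1 := by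
  rw [Matrix.one_fin_three]
  ext i j
  fin_cases i <;> fin_cases j <;>
    simp [Matrix.mul_apply, Fin.sum_univ_three, Matrix.vecHead, Matrix.vecTail] <;> ring

lemma act_inv (X : Matrix (Fin 3) (Fin 3) ℝ) (hdet : IsUnit X.det) (a b c : ℝ) :
    ((!![1,a,b;0,1,c;(0:ℝ),0,1])ᵀ * X * !![1,a,b;0,1,c;(0:ℝ),0,1])⁻¹
      = !![1,-a,a*c-b;0,1,-c;(0:ℝ),0,1] * X⁻¹ * (!![1,-a,a*c-b;0,1,-c;(0:ℝ),0,1])ᵀ := by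
  apply Matrix.inv_eq_left_inv
  have h1 : (!![1,-a,a*c-b;0,1,-c;(0:ℝ),0,1])ᵀ * (!![1,a,b;0,1,c;(0:ℝ),0,1])ᵀ = 1 := by
    rw [← Matrix.transpose_mul, heis_mul_right, Matrix.transpose_one]
  calc !![1,-a,a*c-b;0,1,-c;(0:ℝ),0,1] * X⁻¹ * (!![1,-a,a*c-b;0,1,-c;(0:ℝ),0,1])ᵀ *
        ((!![1,a,b;0,1,c;(0:ℝ),0,1])ᵀ * X * !![1,a,b;0,1,c;(0:ℝ),0,1])
      = !![1,-a,a*c-b;0,1,-c;(0:ℝ),0,1] * X⁻¹ *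
        ((!![1,-a,a*c-b;0,1,-c;(0:ℝ),0,1])ᵀ * (!![1,a,b;0,1,c;(0:ℝ),0,1])ᵀ) *
        X * !![1,a,b;0,1,c;(0:ℝ),0,1] := by
        simp only [Matrix.mul_assoc]
    _ = !![1,-a,a*c-b;0,1,-c;(0:ℝ),0,1] * (X⁻¹ * X) * !![1,a,b;0,1,c;(0:ℝ),0,1] := by
        rw [h1]; simp only [Matrix.mul_one, Matrix.mul_assoc]
    _ = 1 := by rw [Matrix.nonsing_inv_mul X hdet, Matrix.mul_one, heis_mul_left]

lemma trace_id (a b c p q r t w ν ε N : ℝ) (hw : w ≠ 0) :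
    Matrix.trace (!![1,-a,a*c-b;0,1,-c;(0:ℝ),0,1] * !![p,q,r;q,t,0;r,0,w] *
        (!![1,-a,a*c-b;0,1,-c;(0:ℝ),0,1])ᵀ *
        !![1, -ν, -r/w; -ν, ν^2+ε, ν*r/w + ε*N/2; -r/w, ν*r/w + ε*N/2, r^2/w^2 + ε*N^2/4 + 1])
      - Matrix.trace (!![p,q,r;q,t,0;r,0,w] *
        !![1, -ν, -r/w; -ν, ν^2+ε, ν*r/w + ε*N/2; -r/w, ν*r/w + ε*N/2, r^2/w^2 + ε*N^2/4 + 1])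
      = t*a^2 - 2*(q - ν*t)*a + w*(((a*c - b) + ν*c)^2 + ε*c*(c-N)) := by
  simp only [Matrix.trace_fin_three, Matrix.mul_apply, Fin.sum_univ_three, Matrix.transpose_apply]
  simp
  field_simp
  ring

lemma Amat_posdef (r w ν ε N : ℝ) (hw : w ≠ 0) (hε : 0 < ε) :
    (!![1, -ν, -r/w; -ν, ν^2+ε, ν*r/w + ε*N/2; -r/w, ν*r/w + ε*N/2,
        r^2/w^2 + ε*N^2/4 + 1] : Matrix (Fin 3) (Fin 3) ℝ).PosDef := by
  rw [Matrix.posDef_iff_dotProduct_mulVec]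
  constructor
  · ext i j
    fin_cases i <;> fin_cases j <;>
      simp [Matrix.conjTranspose_apply, Matrix.vecHead, Matrix.vecTail]
  · intro x hx
    have hx' : ¬ (x 0 = 0 ∧ x 1 = 0 ∧ x 2 = 0) := by
      intro ⟨h0, h1, h2⟩
      apply hx
      funext i
      fin_cases i <;> simp [h0, h1, h2]
    have key : star x ⬝ᵥ (!![1, -ν, -r/w; -ν, ν^2+ε, ν*r/w + ε*N/2; -r/w, ν*r/w + ε*N/2,
        r^2/w^2 + ε*N^2/4 + 1] : Matrix (Fin 3) (Fin 3) ℝ) *ᵥ x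
        = (x 0 - ν * x 1 - (r/w) * x 2)^2 + ε * (x 1 + (N/2) * x 2)^2 + (x 2)^2 := by
      simp [dotProduct, Matrix.mulVec, Fin.sum_univ_three, Matrix.vecHead, Matrix.vecTail]
      field_simp
      ring
    rw [key]
    rcases eq_or_ne (x 2) 0 with h2 | h2
    · rcases eq_or_ne (x 1) 0 with h1 | h1
      · have h0 : x 0 ≠ 0 := by tauto
        have : x 0 - ν * x 1 - (r/w) * x 2 = x 0 := by rw [h1, h2]; ring
        rw [this, h1, h2]
        have h0' : 0 < (x 0)^2 := by positivity
        nlinarith [sq_nonneg (N/2 * (0:ℝ))]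
      · have hp : 0 < (x 1 + (N/2) * x 2)^2 := by
          rw [h2]; simpa using (by positivity : (0:ℝ) < (x 1)^2)
        nlinarith [sq_nonneg (x 0 - ν * x 1 - (r/w) * x 2), sq_nonneg (x 2)]
    · have hp : 0 < (x 2)^2 := by positivity
      nlinarith [sq_nonneg (x 0 - ν * x 1 - (r/w) * x 2), sq_nonneg (x 1 + (N/2) * x 2)]

lemma Amat_det (r w ν ε N : ℝ) (hw : w ≠ 0) :
    (!![1, -ν, -r/w; -ν, ν^2+ε, ν*r/w + ε*N/2; -r/w, ν*r/w + ε*N/2,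
        r^2/w^2 + ε*N^2/4 + 1] : Matrix (Fin 3) (Fin 3) ℝ).det = ε := by
  rw [Matrix.det_fin_three]
  simp
  field_simp
  ring

set_option maxHeartbeats 2000000 in
lemma key_pos (t w q ν : ℝ) (ht : 0 < t) (hw : 0 < w)
    (habs : |q - ν*t| < t/2) (n : ℤ) (hn : 3 ≤ n) (P : ℤ)
    (hν : ν = (P:ℝ)/(n:ℝ))
    (hmid : ∀ c : ℤ, 0 < c → c < n → ¬ (n ∣ P*c))
    (a c d : ℤ) (h1 : ¬(a = 0 ∧ c = 0 ∧ d = 0)) (h2 : ¬(a = 0 ∧ c = n ∧ d = -P)) :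
    0 < t*(a:ℝ)^2 - 2*(q - ν*t)*(a:ℝ)
      + w*(((d:ℝ) + ν*(c:ℝ))^2 + (1/(n:ℝ)^6)*(c:ℝ)*((c:ℝ)-(n:ℝ))) := by
  have hn0 : (0:ℝ) < (n:ℝ) := by exact_mod_cast lt_of_lt_of_le (by norm_num) hn
  have hn3 : (3:ℝ) ≤ (n:ℝ) := by exact_mod_cast hn
  -- part 1 : the `a` part
  have T1nonneg : 0 ≤ t*(a:ℝ)^2 - 2*(q - ν*t)*(a:ℝ) := by
    rcases eq_or_ne a 0 with ha | ha
    · simp [ha]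
    · have ha1 : (1:ℝ) ≤ |(a:ℝ)| := by
        rw [← Int.cast_abs]; exact_mod_cast Int.one_le_abs ha
      have hprod : (q - ν*t)*(a:ℝ) ≤ |q - ν*t| * |(a:ℝ)| := by
        calc (q - ν*t)*(a:ℝ) ≤ |(q - ν*t)*(a:ℝ)| := le_abs_self _
          _ = |q - ν*t| * |(a:ℝ)| := abs_mul _ _
      have habs' : |q - ν*t| * |(a:ℝ)| ≤ (t/2) * |(a:ℝ)| :=
        mul_le_mul_of_nonneg_right (le_of_lt habs) (abs_nonneg _)
      nlinarith [sq_abs (a:ℝ), abs_nonneg (a:ℝ),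
        mul_nonneg (le_of_lt ht) (mul_nonneg (abs_nonneg (a:ℝ)) (by linarith : (0:ℝ) ≤ |(a:ℝ)| - 1))]
  have T1pos : a ≠ 0 → 0 < t*(a:ℝ)^2 - 2*(q - ν*t)*(a:ℝ) := by
    intro ha
    have ha1 : (1:ℝ) ≤ |(a:ℝ)| := by
      rw [← Int.cast_abs]; exact_mod_cast Int.one_le_abs ha
    have hprod : (q - ν*t)*(a:ℝ) ≤ |q - ν*t| * |(a:ℝ)| := by
      calc (q - ν*t)*(a:ℝ) ≤ |(q - ν*t)*(a:ℝ)| := le_abs_self _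
        _ = |q - ν*t| * |(a:ℝ)| := abs_mul _ _
    have habs' : |q - ν*t| * |(a:ℝ)| < (t/2) * |(a:ℝ)| :=
      mul_lt_mul_of_pos_right habs (by linarith)
    nlinarith [sq_abs (a:ℝ), abs_nonneg (a:ℝ),
      mul_nonneg (le_of_lt ht) (mul_nonneg (abs_nonneg (a:ℝ)) (by linarith : (0:ℝ) ≤ |(a:ℝ)| - 1))]
  -- part 2 : the `(c,d)` part
  set u : ℝ := (d:ℝ) + ν*(c:ℝ) with hu
  clear_value u
  set G : ℝ := u^2 + (1/(n:ℝ)^6)*(c:ℝ)*((c:ℝ)-(n:ℝ)) with hG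
  clear_value G
  have T2nonneg : (0 < c → c < n → True) → True := fun _ => trivial
  -- case analysis on c
  have Gcases : 0 ≤ G ∧ (a = 0 → 0 < G) := by
    rcases lt_trichotomy c 0 with hc | hc | hc
    · -- c < 0 : c(c-n) ≥ 1·(1+n) > 0
      have hc1 : (c:ℝ) ≤ -1 := by
        have : c ≤ -1 := by omega
        exact_mod_cast this
      have hq : (1:ℝ) ≤ (c:ℝ)*((c:ℝ)-(n:ℝ)) := by nlinarith
      have : 0 < G := by
        have h6 : (0:ℝ) < (n:ℝ)^6 := by positivity
        have : (0:ℝ) < (1/(n:ℝ)^6)*(c:ℝ)*((c:ℝ)-(n:ℝ)) := by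
          rw [mul_assoc]; positivity
        nlinarith [sq_nonneg u]
      exact ⟨le_of_lt this, fun _ => this⟩
    · -- c = 0
      subst hc
      have hGd : G = (d:ℝ)^2 := by simp [hG, hu]
      constructor
      · rw [hGd]; positivity
      · intro ha
        have hd : d ≠ 0 := by
          intro hd; exact h1 ⟨ha, rfl, hd⟩
        have : (1:ℝ) ≤ |(d:ℝ)| := by
          rw [← Int.cast_abs]; exact_mod_cast Int.one_le_abs hd
        rw [hGd]
        nlinarith [sq_abs (d:ℝ)]
    · rcases lt_trichotomy c n with hcn | hcn | hcn
      · -- 0 < c < n : middle rows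
        have hnd : (n:ℤ) * d + P * c ≠ 0 := by
          intro h0
          apply hmid c hc hcn
          exact ⟨-d, by linear_combination h0⟩
        have h1abs : (1:ℝ) ≤ |((n:ℤ) * d + P * c : ℤ)| := by
          exact_mod_cast Int.one_le_abs hnd
        have husq : (1:ℝ)/(n:ℝ)^2 ≤ u^2 := by
          have : u = (((n:ℤ) * d + P * c : ℤ) : ℝ) / (n:ℝ) := by
            rw [hu, hν]
            push_cast
            field_simp [hu, hν]
          rw [this, div_pow]
          have hx1 : (1:ℝ) ≤ |(((n * d + P * c : ℤ)):ℝ)| := by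
            rw [← Int.cast_abs]; exact_mod_cast Int.one_le_abs hnd
          have hx2 : (1:ℝ) ≤ (((n * d + P * c : ℤ)):ℝ)^2 := by
            nlinarith [hx1, sq_abs (((n * d + P * c : ℤ)):ℝ), abs_nonneg (((n * d + P * c : ℤ)):ℝ)]
          gcongr
        have hcc : (c:ℝ)*((n:ℝ)-(c:ℝ)) ≤ (n:ℝ)^2/4 := by
          nlinarith [sq_nonneg ((c:ℝ) - (n:ℝ)/2)]
        have hccpos : (0:ℝ) ≤ (c:ℝ)*((n:ℝ)-(c:ℝ)) := by
          have h1 : (0:ℝ) < (c:ℝ) := by exact_mod_cast hc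
          have h2 : (c:ℝ) < (n:ℝ) := by exact_mod_cast hcn
          nlinarith
        have hGpos : 0 < G := by
          rw [hG]
          have h6 : (0:ℝ) < (n:ℝ)^6 := by positivity
          have hrw2 : u^2 + (1/(n:ℝ)^6)*(c:ℝ)*((c:ℝ)-(n:ℝ))
              = (u^2*(n:ℝ)^6 + (c:ℝ)*((c:ℝ)-(n:ℝ))) / (n:ℝ)^6 := by
            field_simp
          rw [hrw2]
          apply div_pos _ h6
          have hA : (n:ℝ)^4 ≤ u^2*(n:ℝ)^6 := by
            calc (n:ℝ)^4 = (1/(n:ℝ)^2)*(n:ℝ)^6 := by field_simp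
              _ ≤ u^2*(n:ℝ)^6 := mul_le_mul_of_nonneg_right husq (le_of_lt h6)
          have h9 : (9:ℝ) ≤ (n:ℝ)^2 := by nlinarith [hn3]
          have hp2 : (0:ℝ) < (n:ℝ)^2 := by positivity
          nlinarith [hA, hcc, h9, hp2]
        exact ⟨le_of_lt hGpos, fun _ => hGpos⟩
      · -- c = n
        subst hcn
        have hun : u = (d:ℝ) + (P:ℝ) := by
          rw [hu, hν]; field_simp
        have hG' : G = ((d:ℝ) + (P:ℝ))^2 := by
          rw [hG, hun]; ring_nf
        constructor
        · rw [hG']; positivity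
        · intro ha
          have hd : d ≠ -P := by
            intro hd; exact h2 ⟨ha, rfl, hd⟩
          have hdp : d + P ≠ 0 := by omega
          have : (1:ℝ) ≤ |((d + P : ℤ):ℝ)| := by
            rw [← Int.cast_abs]; exact_mod_cast Int.one_le_abs hdp
          rw [hG']
          push_cast at this
          nlinarith [this, sq_abs ((d:ℝ)+(P:ℝ)), abs_nonneg ((d:ℝ)+(P:ℝ))]
      · -- c > n
        have hc1 : (n:ℝ) + 1 ≤ (c:ℝ) := by exact_mod_cast hcn
        have hq : (1:ℝ) ≤ (c:ℝ)*((c:ℝ)-(n:ℝ)) := by nlinarith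
        have : 0 < G := by
          have : (0:ℝ) < (1/(n:ℝ)^6)*(c:ℝ)*((c:ℝ)-(n:ℝ)) := by
            have h6 : (0:ℝ) < (n:ℝ)^6 := by positivity
            calc (0:ℝ) < (1/(n:ℝ)^6) * 1 := by positivity
              _ ≤ (1/(n:ℝ)^6)*((c:ℝ)*((c:ℝ)-(n:ℝ))) := by
                  apply mul_le_mul_of_nonneg_left hq (by positivity)
              _ = (1/(n:ℝ)^6)*(c:ℝ)*((c:ℝ)-(n:ℝ)) := by ring
          nlinarith [sq_nonneg u]
        exact ⟨le_of_lt this, fun _ => this⟩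
  -- combine
  rcases eq_or_ne a 0 with ha | ha
  · have hG0 := Gcases.2 ha
    have h0 : t*(a:ℝ)^2 - 2*(q - ν*t)*(a:ℝ) = 0 := by
      rw [ha]; push_cast; ring
    have hwG : 0 < w * G := mul_pos hw hG0
    linarith
  · have h1' := T1pos ha
    have hwG : 0 ≤ w * G := mul_nonneg (le_of_lt hw) Gcases.1
    linarith

lemma posdef_smul {A : Matrix (Fin 3) (Fin 3) ℝ} (hA : A.PosDef) {c : ℝ} (hc : 0 < c) :
    (c • A).PosDef := by
  rw [Matrix.posDef_iff_dotProduct_mulVec]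
  constructor
  · have h1 := hA.1
    unfold Matrix.IsHermitian at *
    rw [Matrix.conjTranspose_smul, h1, star_trivial]
  · intro x hx
    have h := hA.dotProduct_mulVec_pos hx
    rw [Matrix.smul_mulVec, dotProduct_smul]
    exact mul_pos hc h

lemma diag_pos {M : Matrix (Fin 3) (Fin 3) ℝ} (hM : M.PosDef) (i : Fin 3) : 0 < M i i := by
  have hx : (Pi.single i 1 : Fin 3 → ℝ) ≠ 0 := by
    intro h
    have := congr_fun h i
    simp at this
  have h := hM.dotProduct_mulVec_pos hx
  have : star (Pi.single i (1:ℝ)) ⬝ᵥ M *ᵥ Pi.single i (1:ℝ) = M i i := by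
    fin_cases i <;>
      simp [dotProduct, Matrix.mulVec, Pi.single_apply, Fin.sum_univ_three]
  rwa [this] at h

/-- the numerator choice -/
noncomputable def Pz (x : ℝ) (n : ℕ) : ℤ :=
  if (n:ℤ) ∣ ⌊(n:ℝ) * x⌋ then ⌊(n:ℝ) * x⌋ + 1 else ⌊(n:ℝ) * x⌋

/-- the Heisenberg element contributing a facet -/
noncomputable def gam (x : ℝ) (n : ℕ) : Matrix (Fin 3) (Fin 3) ℝ :=
  !![1, 0, ((Pz x n : ℤ):ℝ); 0, 1, (n:ℝ); 0, 0, 1]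

lemma Pz_not_dvd (x : ℝ) (n : ℕ) (hn : 3 ≤ n) : ¬ ((n:ℤ) ∣ Pz x n) := by
  unfold Pz
  by_cases h : (n:ℤ) ∣ ⌊(n:ℝ) * x⌋
  · rw [if_pos h]
    intro h2
    have h3 : (n:ℤ) ∣ 1 := by
      have := dvd_sub h2 h
      simpa using this
    have := Int.le_of_dvd one_pos h3
    omega
  · rw [if_neg h]; exact h

lemma Pz_close (x : ℝ) (n : ℕ) : |(n:ℝ) * x - (Pz x n : ℝ)| ≤ 1 := by
  unfold Pz
  have h1 := Int.floor_le ((n:ℝ) * x)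
  have h2 := Int.lt_floor_add_one ((n:ℝ) * x)
  by_cases h : (n:ℤ) ∣ ⌊(n:ℝ) * x⌋
  · rw [if_pos h]
    rw [abs_le]
    push_cast
    constructor <;> linarith
  · rw [if_neg h]
    rw [abs_le]
    constructor <;> linarith

end Aux

set_option maxHeartbeats 1000000 in
lemma facet (X : Matrix (Fin 3) (Fin 3) ℝ) (hXpd : X.PosDef) (hXdet : X.det = 1)
    (h23 : (X⁻¹) 1 2 = 0) (n : ℕ) (hp : Nat.Prime n) (hn : 3 ≤ n) :
    Heis (gam ((X⁻¹ 0 1) / (X⁻¹ 1 1)) n) ∧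
      ∃ A : Matrix (Fin 3) (Fin 3) ℝ, PD3 A ∧
        sel (act (gam ((X⁻¹ 0 1) / (X⁻¹ 1 1)) n) X) A = sel X A ∧
        ∀ γ' : Matrix (Fin 3) (Fin 3) ℝ, Heis γ' → γ' ≠ 1 →
          γ' ≠ gam ((X⁻¹ 0 1) / (X⁻¹ 1 1)) n → sel X A < sel (act γ' X) A := by
  have hXdetu : IsUnit X.det := by rw [hXdet]; exact isUnit_one
  have hSpd : (X⁻¹).PosDef := hXpd.inv
  have hSH : (X⁻¹).IsHermitian := hSpd.1
  set p : ℝ := X⁻¹ 0 0 with hp0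
  set q : ℝ := X⁻¹ 0 1 with hq0
  set r : ℝ := X⁻¹ 0 2 with hr0
  set t : ℝ := X⁻¹ 1 1 with ht0
  set w : ℝ := X⁻¹ 2 2 with hw0
  have ht : 0 < t := diag_pos hSpd 1
  have hw : 0 < w := diag_pos hSpd 2
  have hwne : w ≠ 0 := ne_of_gt hw
  have htne : t ≠ 0 := ne_of_gt ht
  have hnR : (0:ℝ) < (n:ℝ) := by exact_mod_cast Nat.lt_of_lt_of_le (by norm_num) hn
  have hnRne : (n:ℝ) ≠ 0 := ne_of_gt hnR
  have hn3R : (3:ℝ) ≤ (n:ℝ) := by exact_mod_cast hn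
  -- reconstructed inverse
  have hS10 : X⁻¹ 1 0 = q := by
    have := hSH.apply 0 1; rw [star_trivial] at this; rw [hq0, ← this]
  have hS20 : X⁻¹ 2 0 = r := by
    have := hSH.apply 0 2; rw [star_trivial] at this; rw [hr0, ← this]
  have hS21 : X⁻¹ 2 1 = 0 := by
    have := hSH.apply 1 2; rw [star_trivial] at this; rw [← h23, ← this]
  have hS' : X⁻¹ = !![p,q,r;q,t,0;r,0,w] := by
    ext i j
    fin_cases i <;> fin_cases j <;>
      simp [hp0, hq0, hr0, ht0, hw0, hS10, hS20, hS21, h23, Matrix.vecHead, Matrix.vecTail]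
  -- parameters
  set x : ℝ := q / t with hx0
  set P : ℤ := Pz x n with hP0
  set ν : ℝ := (P:ℝ)/(n:ℝ) with hν0
  set ε : ℝ := 1/(n:ℝ)^6 with hε0
  have hε : 0 < ε := by rw [hε0]; positivity
  set AM : Matrix (Fin 3) (Fin 3) ℝ :=
    !![1, -ν, -r/w; -ν, ν^2+ε, ν*r/w + ε*(n:ℝ)/2; -r/w, ν*r/w + ε*(n:ℝ)/2,
        r^2/w^2 + ε*(n:ℝ)^2/4 + 1] with hAM0
  set A : Matrix (Fin 3) (Fin 3) ℝ := ((n:ℝ)^2) • AM with hA0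
  -- |q - ν t| < t/2
  have habs : |q - ν*t| < t/2 := by
    have hc := Pz_close x n
    have heq : q - ν*t = (t/(n:ℝ)) * ((n:ℝ)*x - (P:ℝ)) := by
      rw [hν0, hx0]; field_simp
    rw [heq, abs_mul, abs_of_pos (by positivity : (0:ℝ) < t/(n:ℝ))]
    calc t/(n:ℝ) * |(n:ℝ)*x - (P:ℝ)| ≤ t/(n:ℝ) * 1 := by
          apply mul_le_mul_of_nonneg_left hc (by positivity)
      _ = t/(n:ℝ) := mul_one _
      _ ≤ t/3 := by apply div_le_div_of_nonneg_left (le_of_lt ht) (by norm_num) hn3R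
      _ < t/2 := by linarith
  -- middle divisibility
  have hmid : ∀ c : ℤ, 0 < c → c < (n:ℤ) → ¬ ((n:ℤ) ∣ P*c) := by
    intro c hc1 hc2 hdvd
    have hnp : Prime ((n:ℤ)) := Nat.prime_iff_prime_int.mp hp
    rcases hnp.dvd_mul.1 hdvd with h | h
    · exact Pz_not_dvd x n hn h
    · have := Int.le_of_dvd hc1 h
      omega
  -- the selberg difference formula
  have hsel : ∀ a b c : ℤ,
      sel (act !![1,(a:ℝ),(b:ℝ);0,1,(c:ℝ);0,0,1] X) A - sel X A
        = (n:ℝ)^2 * (t*(a:ℝ)^2 - 2*(q - ν*t)*(a:ℝ)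
            + w*((((a:ℝ)*(c:ℝ) - (b:ℝ)) + ν*(c:ℝ))^2 + ε*(c:ℝ)*((c:ℝ)-(n:ℝ)))) := by
    intro a b c
    have h1 : sel (act !![1,(a:ℝ),(b:ℝ);0,1,(c:ℝ);0,0,1] X) A
        = (n:ℝ)^2 * Matrix.trace (!![1,-(a:ℝ),(a:ℝ)*(c:ℝ)-(b:ℝ);0,1,-(c:ℝ);(0:ℝ),0,1]
            * !![p,q,r;q,t,0;r,0,w]
            * (!![1,-(a:ℝ),(a:ℝ)*(c:ℝ)-(b:ℝ);0,1,-(c:ℝ);(0:ℝ),0,1])ᵀ * AM) := by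
      show Matrix.trace ((((!![1,(a:ℝ),(b:ℝ);0,1,(c:ℝ);0,0,1])ᵀ * X *
          !![1,(a:ℝ),(b:ℝ);0,1,(c:ℝ);0,0,1])⁻¹) * A) = _
      rw [act_inv X hXdetu, hS', hA0, Matrix.mul_smul, Matrix.trace_smul, smul_eq_mul]
    have h2 : sel X A = (n:ℝ)^2 * Matrix.trace (!![p,q,r;q,t,0;r,0,w] * AM) := by
      show Matrix.trace (X⁻¹ * A) = _
      rw [hS', hA0, Matrix.mul_smul, Matrix.trace_smul, smul_eq_mul]
    rw [h1, h2, ← mul_sub]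
    congr 1
    exact trace_id (a:ℝ) (b:ℝ) (c:ℝ) p q r t w ν ε (n:ℝ) hwne
  -- gam as a Heis literal
  have hgam : gam x n = !![1,((0:ℤ):ℝ),((P:ℤ):ℝ);0,1,(((n:ℕ):ℤ):ℝ);0,0,1] := by
    unfold gam
    rw [← hP0]
    norm_num
  refine ⟨⟨0, P, (n:ℤ), hgam⟩, A, ⟨?_, ?_⟩, ?_, ?_⟩
  · -- PosDef A
    rw [hA0]
    exact posdef_smul (Amat_posdef r w ν ε (n:ℝ) hwne hε) (by positivity)
  · -- det A = 1
    rw [hA0, Matrix.det_smul, Amat_det r w ν ε (n:ℝ) hwne, hε0]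
    simp only [Fintype.card_fin]
    field_simp
  · -- equality at gam
    have h := hsel 0 P (n:ℤ)
    rw [hgam]
    push_cast at h ⊢
    have hz : (t*(0:ℝ)^2 - 2*(q - ν*t)*(0:ℝ)
        + w*((((0:ℝ)*(n:ℝ) - (P:ℝ)) + ν*(n:ℝ))^2 + ε*(n:ℝ)*((n:ℝ)-(n:ℝ)))) = 0 := by
      have : ν*(n:ℝ) = (P:ℝ) := by rw [hν0]; field_simp
      rw [this]; ring
    rw [hz, mul_zero] at h
    linarith [h]
  · -- strict inequality elsewhere
    rintro γ' ⟨a, b, c, rfl⟩ hne1 hne2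
    have h := hsel a b c
    have hcond1 : ¬(a = 0 ∧ c = 0 ∧ (a*c - b) = 0) := by
      rintro ⟨ha, hc, hd⟩
      apply hne1
      have hb : b = 0 := by rw [ha, hc] at hd; simpa using hd
      rw [ha, hb, hc]
      rw [Matrix.one_fin_three]
      norm_num
    have hcond2 : ¬(a = 0 ∧ c = (n:ℤ) ∧ (a*c - b) = -P) := by
      rintro ⟨ha, hc, hd⟩
      apply hne2
      have hb : b = P := by rw [ha, hc] at hd; simp at hd; omega
      rw [ha, hb, hc, hgam]
    have hkey := key_pos t w q ν ht hw habs (n:ℤ) (by exact_mod_cast hn) P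
      (by rw [hν0]; norm_num) hmid a c (a*c - b) hcond1 hcond2
    push_cast at hkey
    rw [← hε0] at hkey
    have hn2 : (0:ℝ) < (n:ℝ)^2 := by positivity
    nlinarith [h, hkey, hn2, mul_pos hn2 hkey]


/-- for `X ∈ 𝒫(3)` with `(X⁻¹)₂₃ = 0`, infinitely many elements
`γ ∈ H₃(ℤ)` contribute a facet to the Dirichlet–Selberg domain `DS(X, H₃(ℤ))`:
there is `A ∈ 𝒫(3)` whose Selberg invariant over the orbit is minimized exactly at the
identity and at `γ`. Hence `DS(X, H₃(ℤ))` is infinitely-sided. -/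
theorem heisenberg_infinitely_sided
    (X : Matrix (Fin 3) (Fin 3) ℝ) (hX : PD3 X) (h23 : (X⁻¹) 1 2 = 0) :
    {γ : Matrix (Fin 3) (Fin 3) ℝ | Heis γ ∧
      ∃ A : Matrix (Fin 3) (Fin 3) ℝ, PD3 A ∧
        sel (act γ X) A = sel X A ∧
        ∀ γ' : Matrix (Fin 3) (Fin 3) ℝ, Heis γ' → γ' ≠ 1 → γ' ≠ γ →
          sel X A < sel (act γ' X) A}.Infinite := by
  obtain ⟨hXpd, hXdet⟩ := hX
  set x : ℝ := (X⁻¹ 0 1) / (X⁻¹ 1 1) with hx0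
  have hsub : (gam x) '' {n : ℕ | Nat.Prime n ∧ 3 ≤ n} ⊆
      {γ : Matrix (Fin 3) (Fin 3) ℝ | Heis γ ∧
        ∃ A : Matrix (Fin 3) (Fin 3) ℝ, PD3 A ∧
          sel (act γ X) A = sel X A ∧
          ∀ γ' : Matrix (Fin 3) (Fin 3) ℝ, Heis γ' → γ' ≠ 1 → γ' ≠ γ →
            sel X A < sel (act γ' X) A} := by
    rintro _ ⟨n, ⟨hp, hn⟩, rfl⟩
    exact facet X hXpd hXdet h23 n hp hn
  have hinfprimes : {n : ℕ | Nat.Prime n ∧ 3 ≤ n}.Infinite := by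
    have h1 : ({n : ℕ | Nat.Prime n} \ Set.Iio 3).Infinite :=
      Nat.infinite_setOf_prime.diff (Set.finite_Iio 3)
    apply h1.mono
    rintro n ⟨hp, hn⟩
    exact ⟨hp, not_lt.1 hn⟩
  have hinj : Set.InjOn (gam x) {n : ℕ | Nat.Prime n ∧ 3 ≤ n} := by
    intro n1 _ n2 _ h
    have := congr_fun (congr_fun h 1) 2
    simp only [gam] at this
    simp at this
    exact_mod_cast this
  exact (hinfprimes.image hinj).mono hsub

end Stmt19
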